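/- Let m ≥ 0 and let f : ℝ² → ℍ be integrable and have partial derivatives with respect to the first variable s in the L¹ norm of all orders ≤ m, with g = ∂^m f / ∂s^m denoting the m-fold L¹-norm partial derivative with respect to s. Then the left-sided quaternion Fourier transforms satisfy 𝓖_L(u,v) = (i u)^m 𝓕_L(u,v) for all (u,v) ∈ ℝ². -/

import Mathlib

open MeasureTheory Filter Real Set
open scoped Quaternion Topology

noncomputable section

def qi : ℍ[ℝ] := ⟨0,1,0,0⟩
def qj : ℍ[ℝ] := ⟨0,0,1,0⟩

/-- `e^{μθ} = cos θ + μ sin θ` for a (pure unit) quaternion `μ`. -/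
def qexp (μ : ℍ[ℝ]) (θ : ℝ) : ℍ[ℝ] := (Real.cos θ : ℍ[ℝ]) + Real.sin θ • μ

/-- Left-sided quaternion Fourier transform. -/
def QFT_L (f : ℝ × ℝ → ℍ[ℝ]) (u v : ℝ) : ℍ[ℝ] :=
  ∫ p : ℝ × ℝ, qexp qi (-(u * p.1)) * qexp qj (-(v * p.2)) * f p

/-- `g` is the partial derivative of `f` with respect to the first variable in the `L¹` norm. -/
def L1PartialDerivS (f g : ℝ × ℝ → ℍ[ℝ]) : Prop :=
  Tendsto (fun h : ℝ => ∫ p : ℝ × ℝ, ‖h⁻¹ • (f (p.1 + h, p.2) - f p) - g p‖)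
    (𝓝[≠] (0:ℝ)) (𝓝 0)


lemma norm_qexp_qi (θ : ℝ) : ‖qexp qi θ‖ = 1 := by
  have h : Quaternion.normSq (qexp qi θ) = 1 := by
    simp [qexp, Quaternion.normSq_def', Quaternion.ext_iff]
    simp [qi]
  have h2 := Quaternion.normSq_eq_norm_mul_self (qexp qi θ)
  nlinarith [norm_nonneg (qexp qi θ)]

lemma norm_qexp_qj (θ : ℝ) : ‖qexp qj θ‖ = 1 := by
  have h : Quaternion.normSq (qexp qj θ) = 1 := by
    simp [qexp, Quaternion.normSq_def', Quaternion.ext_iff]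
    simp [qj]
  have h2 := Quaternion.normSq_eq_norm_mul_self (qexp qj θ)
  nlinarith [norm_nonneg (qexp qj θ)]

lemma qexp_qi_add (a b : ℝ) : qexp qi (a + b) = qexp qi a * qexp qi b := by
  simp only [qexp, Quaternion.ext_iff]
  simp [Quaternion.re_mul, Quaternion.imI_mul, Quaternion.imJ_mul, Quaternion.imK_mul,
    Real.cos_add, Real.sin_add]
  simp [qi]
  ring

lemma qexp_zero (μ : ℍ[ℝ]) : qexp μ 0 = 1 := by simp [qexp]

lemma continuous_qexp (μ : ℍ[ℝ]) : Continuous (qexp μ) :=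
  (Quaternion.continuous_coe.comp Real.continuous_cos).add
    (Real.continuous_sin.smul continuous_const)

abbrev K (u v : ℝ) (p : ℝ × ℝ) : ℍ[ℝ] := qexp qi (-(u * p.1)) * qexp qj (-(v * p.2))

lemma continuous_K (u v : ℝ) : Continuous (K u v) :=
  (((continuous_qexp qi).comp (continuous_const.mul continuous_fst).neg).mul
    ((continuous_qexp qj).comp (continuous_const.mul continuous_snd).neg))

lemma norm_K (u v : ℝ) (p : ℝ × ℝ) : ‖K u v p‖ = 1 := by
  rw [norm_mul, norm_qexp_qi, norm_qexp_qj, one_mul]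

lemma integrable_K_mul {φ : ℝ × ℝ → ℍ[ℝ]} (hφ : Integrable φ) (u v : ℝ) :
    Integrable (fun p => K u v p * φ p) := by
  refine hφ.norm.mono' ((continuous_K u v).aestronglyMeasurable.mul hφ.aestronglyMeasurable) ?_
  filter_upwards with p
  rw [norm_mul, norm_K, one_mul]

lemma integral_qmul_left (c : ℍ[ℝ]) {φ : ℝ × ℝ → ℍ[ℝ]} (hφ : Integrable φ) :
    ∫ p, c * φ p = c * ∫ p, φ p := by
  simpa using ContinuousLinearMap.integral_comp_comm
    (ContinuousLinearMap.mul ℝ ℍ[ℝ] c) hφ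

lemma QFT_L_eq (f : ℝ × ℝ → ℍ[ℝ]) (u v : ℝ) :
    QFT_L f u v = ∫ p : ℝ × ℝ, K u v p * f p := rfl

lemma integrable_shift {f : ℝ × ℝ → ℍ[ℝ]} (hf : Integrable f) (h : ℝ) :
    Integrable (fun p : ℝ × ℝ => f (p.1 + h, p.2)) := by
  have hmp : MeasurePreserving (fun p : ℝ × ℝ => p + (h, 0)) volume volume :=
    measurePreserving_add_right volume ((h, 0) : ℝ × ℝ)
  have h2 := (hmp.integrable_comp hf.aestronglyMeasurable).mpr hf
  have : (f ∘ fun p : ℝ × ℝ => p + (h, 0)) = fun p : ℝ × ℝ => f (p.1 + h, p.2) := by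
    funext p
    have hp : p + ((h:ℝ), (0:ℝ)) = (p.1 + h, p.2) := by ext <;> simp
    simp [Function.comp, hp]
  rwa [this] at h2

lemma shift_eq {f : ℝ × ℝ → ℍ[ℝ]} (hf : Integrable f) (u v h : ℝ) :
    ∫ p : ℝ × ℝ, K u v p * f (p.1 + h, p.2) = qexp qi (u * h) * QFT_L f u v := by
  have key : ∫ p : ℝ × ℝ, K u v (p - (h, 0)) * f p
      = ∫ p : ℝ × ℝ, K u v p * f (p.1 + h, p.2) := by
    have := integral_add_right_eq_self (μ := volume)
      (fun p : ℝ × ℝ => K u v (p - (h, 0)) * f p) ((h, 0) : ℝ × ℝ)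
    rw [← this]
    congr 1
    funext p
    have hp : p + ((h:ℝ), (0:ℝ)) = (p.1 + h, p.2) := by ext <;> simp
    rw [hp]
    simp
  rw [← key]
  have keq : ∀ p : ℝ × ℝ, K u v (p - (h, 0)) * f p
      = qexp qi (u * h) * (K u v p * f p) := by
    intro p
    have : -(u * (p - ((h:ℝ), (0:ℝ))).1) = u * h + -(u * p.1) := by
      simp [Prod.fst_sub]; ring
    simp only [K, this, qexp_qi_add, Prod.snd_sub, sub_zero, mul_assoc]
  simp_rw [keq]
  rw [integral_qmul_left _ (integrable_K_mul hf u v), QFT_L_eq]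

lemma hasDerivAt_qexp_i (u : ℝ) :
    HasDerivAt (fun h : ℝ => qexp qi (u * h)) (u • qi) 0 := by
  have hlin : HasDerivAt (fun h : ℝ => u * h) u 0 := by
    simpa using (hasDerivAt_id (0:ℝ)).const_mul u
  have hc : HasDerivAt (fun h : ℝ => Real.cos (u * h)) 0 0 := by
    simpa using hlin.cos
  have hs : HasDerivAt (fun h : ℝ => Real.sin (u * h)) u 0 := by
    simpa using hlin.sin
  have h1 : HasDerivAt (fun h : ℝ => Real.cos (u * h) • (1 : ℍ[ℝ])) ((0:ℝ) • (1:ℍ[ℝ])) 0 :=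
    hc.smul_const (1 : ℍ[ℝ])
  have h2 : HasDerivAt (fun h : ℝ => Real.sin (u * h) • qi) (u • qi) 0 :=
    hs.smul_const qi
  have := h1.add h2
  simp only [zero_smul, zero_add] at this
  convert this using 2 with h
  · rfl
  · rfl
  simp only [qexp]
  congr 1
  ext <;> simp

lemma tendsto_slope_qexp (u : ℝ) :
    Tendsto (fun h : ℝ => h⁻¹ • (qexp qi (u * h) - 1)) (𝓝[≠] (0:ℝ)) (𝓝 (u • qi)) := by
  have := (hasDerivAt_iff_tendsto_slope).mp (hasDerivAt_qexp_i u)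
  have heq : (slope (fun h : ℝ => qexp qi (u * h)) 0)
      = fun h : ℝ => h⁻¹ • (qexp qi (u * h) - 1) := by
    funext h
    rw [slope_def_module]
    simp [qexp_zero]
  rwa [heq] at this

lemma qft_step {f g : ℝ × ℝ → ℍ[ℝ]} (hf : Integrable f) (hg : Integrable g)
    (hd : L1PartialDerivS f g) (u v : ℝ) :
    QFT_L g u v = (u • qi) * QFT_L f u v := by
  set F := QFT_L f u v with hF
  -- the difference quotient
  set Dq : ℝ → ℝ × ℝ → ℍ[ℝ] := fun h p => h⁻¹ • (f (p.1 + h, p.2) - f p) with hDq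
  have hDqInt : ∀ h : ℝ, Integrable (Dq h) := fun h =>
    (((integrable_shift hf h).sub hf).smul h⁻¹)
  -- QFT of difference quotient
  have key : ∀ h : ℝ, QFT_L (Dq h) u v = (h⁻¹ • (qexp qi (u * h) - 1)) * F := by
    intro h
    rw [QFT_L_eq]
    have e1 : ∀ p : ℝ × ℝ, K u v p * Dq h p
        = h⁻¹ • (K u v p * f (p.1 + h, p.2) - K u v p * f p) := by
      intro p
      simp only [hDq, mul_smul_comm, mul_sub]
    simp_rw [e1]
    rw [integral_smul]
    rw [integral_sub (integrable_K_mul (integrable_shift hf h) u v) (integrable_K_mul hf u v)]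
    rw [shift_eq hf u v h, ← QFT_L_eq, ← hF, smul_mul_assoc, sub_mul, one_mul]
  -- convergence to (u • qi) * F
  have lim1 : Tendsto (fun h : ℝ => QFT_L (Dq h) u v) (𝓝[≠] (0:ℝ)) (𝓝 ((u • qi) * F)) := by
    simp_rw [key]
    exact (tendsto_slope_qexp u).mul_const F
  -- convergence to QFT_L g
  have lim2 : Tendsto (fun h : ℝ => QFT_L (Dq h) u v) (𝓝[≠] (0:ℝ)) (𝓝 (QFT_L g u v)) := by
    rw [tendsto_iff_norm_sub_tendsto_zero]
    have hb : ∀ h : ℝ, ‖QFT_L (Dq h) u v - QFT_L g u v‖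
        ≤ ∫ p : ℝ × ℝ, ‖Dq h p - g p‖ := by
      intro h
      rw [QFT_L_eq, QFT_L_eq,
        ← integral_sub (integrable_K_mul (hDqInt h) u v) (integrable_K_mul hg u v)]
      refine le_trans (norm_integral_le_integral_norm _) (le_of_eq ?_)
      congr 1
      funext p
      rw [← mul_sub, norm_mul, norm_K, one_mul]
    refine squeeze_zero (fun h => norm_nonneg _) hb ?_
    exact hd
  exact tendsto_nhds_unique lim2 lim1

/-- The left-sided QFT of the `m`-fold `L¹`-norm partial derivative `∂^m f/∂s^m`
equals `(iu)^m 𝓕_L(u,v)`. -/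
theorem qft_left_sided_iterated_deriv_s
    (m : ℕ) (f : ℝ × ℝ → ℍ[ℝ]) (hf : Integrable f)
    (D : ℕ → (ℝ × ℝ → ℍ[ℝ])) (hD0 : D 0 = f)
    (hInt : ∀ k ≤ m, Integrable (D k))
    (hDs : ∀ k < m, L1PartialDerivS (D k) (D (k + 1))) :
    ∀ u v : ℝ, QFT_L (D m) u v = (u • qi) ^ m * QFT_L f u v := by

  revert hInt hDs
  induction m with
  | zero =>
    intro hInt hDs u v
    simp [hD0]
  | succ n ih =>
    intro hInt hDs u v
    have h1 : QFT_L (D (n + 1)) u v = (u • qi) * QFT_L (D n) u v :=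
      qft_step (hInt n (Nat.le_succ n)) (hInt (n + 1) le_rfl)
        (hDs n (Nat.lt_succ_self n)) u v
    rw [h1, ih (fun k hk => hInt k (hk.trans (Nat.le_succ n)))
        (fun k hk => hDs k (hk.trans (Nat.lt_succ_self n))) u v,
      ← mul_assoc, ← pow_succ']
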